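/- arXiv:2102.03875 — 5 statements merged into one kernel-verified Lean document; each statement's English description precedes it below -/
import Mathlib

section
/- Let X and Y be finite sets and let p : X → ℝ, q : Y → ℝ be strictly positive with ∑_x p_x = ∑_y q_y = 1. Suppose μ̂ belongs to the relative interior of the set of matchings M (interior relative to the affine span of M). If Φ ∈ ℝ^{X×Y} is such that μ̂ maximizes ⟨·, Φ⟩ over M, then Φ is separable, i.e. there exist f : X → ℝ and g : Y → ℝ with Φ_{xy} = f_x + g_y for all (x,y). In particular, a matching in the relative interior of M is not rationalizable. -/
open Finset

/-- The set of matchings with marginals `p` and `q`. -/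
def matchings {X Y : Type*} [Fintype X] [Fintype Y] (p : X → ℝ) (q : Y → ℝ) :
    Set (X → Y → ℝ) :=
  {μ | (∀ x y, 0 ≤ μ x y) ∧ (∀ x, ∑ y, μ x y = p x) ∧ (∀ y, ∑ x, μ x y = q y)}

/-- Total surplus `⟨μ, Φ⟩ = ∑_{x,y} μ_{xy} Φ_{xy}`. -/
def pairing {X Y : Type*} [Fintype X] [Fintype Y] (μ Φ : X → Y → ℝ) : ℝ :=
  ∑ x, ∑ y, μ x y * Φ x y

lemma extend_lemma {X Y : Type*} [Fintype X] [Fintype Y] {p : X → ℝ} {q : Y → ℝ}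
    {μhat : X → Y → ℝ} (hμhat : μhat ∈ intrinsicInterior ℝ (matchings p q)) :
    ∀ ν ∈ matchings p q, ∃ t : ℝ, 0 < t ∧ μhat + t • (μhat - ν) ∈ matchings p q := by
  obtain ⟨z, hz, rfl⟩ := hμhat
  rw [mem_interior_iff_mem_nhds, Metric.mem_nhds_iff] at hz
  obtain ⟨ε, hε, hball⟩ := hz
  intro ν hν
  have hνspan : ν ∈ affineSpan ℝ (matchings p q) := subset_affineSpan ℝ _ hν
  set t : ℝ := ε / (2 * (‖(z : X → Y → ℝ) - ν‖ + 1)) with ht_def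
  have hnorm : (0:ℝ) ≤ ‖(z : X → Y → ℝ) - ν‖ := norm_nonneg _
  have ht : 0 < t := by positivity
  refine ⟨t, ht, ?_⟩
  have hw : (z : X → Y → ℝ) + t • ((z : X → Y → ℝ) - ν) ∈ affineSpan ℝ (matchings p q) := by
    have := (affineSpan ℝ (matchings p q)).smul_vsub_vadd_mem t z.2 hνspan z.2
    simpa [vsub_eq_sub, vadd_eq_add, add_comm] using this
  have hdist : dist (⟨_, hw⟩ : affineSpan ℝ (matchings p q)) z < ε := by
    rw [Subtype.dist_eq]
    simp only [dist_eq_norm, add_sub_cancel_left, norm_smul, Real.norm_eq_abs,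
      abs_of_pos ht]
    rw [ht_def, div_mul_eq_mul_div, div_lt_iff₀ (by positivity)]
    nlinarith
  exact hball hdist

lemma pairing_comb {X Y : Type*} [Fintype X] [Fintype Y] (μ ν Φ : X → Y → ℝ) (t : ℝ) :
    pairing (μ + t • (μ - ν)) Φ = pairing μ Φ + t * (pairing μ Φ - pairing ν Φ) := by
  simp only [pairing, Pi.add_apply, Pi.smul_apply, Pi.sub_apply, smul_eq_mul, add_mul,
    mul_sub, sub_mul, Finset.sum_add_distrib, Finset.sum_sub_distrib, Finset.mul_sum, mul_assoc]

theorem relint_maximizer_separable {X Y : Type*} [Fintype X] [Fintype Y]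
    (p : X → ℝ) (q : Y → ℝ)
    (hp : ∀ x, 0 < p x) (hq : ∀ y, 0 < q y)
    (hpsum : ∑ x, p x = 1) (hqsum : ∑ y, q y = 1)
    (μhat : X → Y → ℝ) (hμhat : μhat ∈ intrinsicInterior ℝ (matchings p q))
    (Φ : X → Y → ℝ)
    (hmax : ∀ μ ∈ matchings p q, pairing μ Φ ≤ pairing μhat Φ) :
    ∃ (f : X → ℝ) (g : Y → ℝ), ∀ x y, Φ x y = f x + g y := by
  classical
  -- every matching attains the same value
  have heq : ∀ ν ∈ matchings p q, pairing ν Φ = pairing μhat Φ := by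
    intro ν hν
    have h1 := hmax ν hν
    obtain ⟨t, ht, hw⟩ := extend_lemma hμhat ν hν
    have h2 := hmax _ hw
    rw [pairing_comb] at h2
    nlinarith
  -- nonemptiness
  have hX : Nonempty X := by
    rcases isEmpty_or_nonempty X with h | h
    · simp only [Finset.univ_eq_empty, Finset.sum_empty] at hpsum; norm_num at hpsum
    · exact h
  have hY : Nonempty Y := by
    rcases isEmpty_or_nonempty Y with h | h
    · simp only [Finset.univ_eq_empty, Finset.sum_empty] at hqsum; norm_num at hqsum
    · exact h
  obtain ⟨x0⟩ := hX
  obtain ⟨y0⟩ := hY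
  -- a positive lower bound for the entries of the independent coupling
  set εp : ℝ := Finset.univ.inf' (show (Finset.univ : Finset X).Nonempty from ⟨x0, Finset.mem_univ _⟩) p with hεp_def
  set εq : ℝ := Finset.univ.inf' (show (Finset.univ : Finset Y).Nonempty from ⟨y0, Finset.mem_univ _⟩) q with hεq_def
  have hεp : 0 < εp := by
    rw [hεp_def, Finset.lt_inf'_iff]
    exact fun x _ => hp x
  have hεq : 0 < εq := by
    rw [hεq_def, Finset.lt_inf'_iff]
    exact fun y _ => hq y
  set ε : ℝ := εp * εq with hε_def
  have hε : 0 < ε := mul_pos hεp hεq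
  have hεle : ∀ a b, ε ≤ p a * q b := fun a b =>
    mul_le_mul (Finset.inf'_le _ (Finset.mem_univ a)) (Finset.inf'_le _ (Finset.mem_univ b))
      hεq.le (hp a).le
  -- the independent coupling is a matching
  have hμ0 : (fun a b => p a * q b) ∈ matchings p q := by
    refine ⟨fun a b => (mul_pos (hp a) (hq b)).le, fun a => ?_, fun b => ?_⟩
    · rw [← Finset.mul_sum, hqsum, mul_one]
    · rw [← Finset.sum_mul, hpsum, one_mul]
  -- the key cycle identity
  have key : ∀ x y, Φ x y + Φ x0 y0 = Φ x y0 + Φ x0 y := by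
    intro x y
    by_cases hxx : x = x0
    · subst hxx; ring
    by_cases hyy : y = y0
    · subst hyy; ring
    set ν : X → Y → ℝ := fun a b => p a * q b +
        (if a = x then ((if b = y then ε else 0) - (if b = y0 then ε else 0)) else 0) +
        (if a = x0 then ((if b = y0 then ε else 0) - (if b = y then ε else 0)) else 0) with hν_def
    have hνmem : ν ∈ matchings p q := by
      refine ⟨fun a b => ?_, fun a => ?_, fun b => ?_⟩
      · have h1 := hεle a b
        have h2 := (mul_pos (hp a) (hq b)).le
        simp only [hν_def]
        split_ifs <;> linarith
      · simp only [hν_def, Finset.sum_add_distrib]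
        rw [← Finset.mul_sum, hqsum, mul_one]
        by_cases hax : a = x <;> by_cases hax0 : a = x0 <;>
          simp [hax, hax0, Finset.sum_sub_distrib, Finset.sum_ite_eq']
      · simp only [hν_def, Finset.sum_add_distrib]
        rw [← Finset.sum_mul, hpsum, one_mul]
        simp [Finset.sum_ite_eq', sub_eq_zero]
        ring
    have hpν : pairing ν Φ = pairing (fun a b => p a * q b) Φ +
        ε * (Φ x y + Φ x0 y0 - Φ x y0 - Φ x0 y) := by
      have hx1 : ∀ (u : X) (D : Y → ℝ),
          (∑ a, ∑ b, (if a = u then D b else 0) * Φ a b) = ∑ b, D b * Φ u b := by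
        intro u D
        rw [Finset.sum_eq_single u]
        · simp
        · intro a _ hau; simp [hau]
        · simp
      simp only [pairing, hν_def, add_mul, Finset.sum_add_distrib, hx1]
      simp [sub_mul, ite_mul, zero_mul, Finset.sum_sub_distrib, Finset.sum_ite_eq']
      ring
    have h1 := heq ν hνmem
    have h2 := heq _ hμ0
    rw [hpν, h2] at h1
    have : Φ x y + Φ x0 y0 - Φ x y0 - Φ x0 y = 0 := by
      have := hε.ne'
      nlinarith
    linarith
  refine ⟨fun x => Φ x y0, fun y => Φ x0 y - Φ x0 y0, fun x y => ?_⟩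
  have := key x y
  show Φ x y = Φ x y0 + (Φ x0 y - Φ x0 y0)
  linarith
end

section
/- Let X and Y be finite sets with |X| ≥ 2 and |Y| ≥ 2, and let p : X → ℝ, q : Y → ℝ be strictly positive with ∑_x p_x = ∑_y q_y = 1. Suppose μ̂ ∈ M lies on the relative boundary of M, i.e. μ̂ ∈ M but μ̂ is not in the relative interior of M. Then there exists a non-separable Φ ∈ ℝ^{X×Y} such that μ̂ maximizes ⟨·, Φ⟩ over M; that is, μ̂ is rationalizable. -/
open Finset

/-- The affine subspace of arrays with prescribed marginals. -/
noncomputable def marginalSubspace {X Y : Type*} [Fintype X] [Fintype Y] (p : X → ℝ) (q : Y → ℝ) :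
    AffineSubspace ℝ (X → Y → ℝ) where
  carrier := {ν | (∀ x, ∑ y, ν x y = p x) ∧ (∀ y, ∑ x, ν x y = q y)}
  smul_vsub_vadd_mem' c {p₁ p₂ p₃} h₁ h₂ h₃ := by
    constructor
    · intro x
      have : ∀ y, (c • (p₁ -ᵥ p₂) +ᵥ p₃) x y = c * (p₁ x y - p₂ x y) + p₃ x y := by
        intro y; simp [vsub_eq_sub, vadd_eq_add]
      simp only [this, Finset.sum_add_distrib, ← Finset.mul_sum, Finset.sum_sub_distrib,
        h₁.1 x, h₂.1 x, h₃.1 x]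
      ring
    · intro y
      have : ∀ x, (c • (p₁ -ᵥ p₂) +ᵥ p₃) x y = c * (p₁ x y - p₂ x y) + p₃ x y := by
        intro x; simp [vsub_eq_sub, vadd_eq_add]
      simp only [this, Finset.sum_add_distrib, ← Finset.mul_sum, Finset.sum_sub_distrib,
        h₁.2 y, h₂.2 y, h₃.2 y]
      ring

theorem relboundary_rationalizable {X Y : Type*} [Fintype X] [Fintype Y]
    (hX : 2 ≤ Fintype.card X) (hY : 2 ≤ Fintype.card Y)
    (p : X → ℝ) (q : Y → ℝ)
    (hp : ∀ x, 0 < p x) (hq : ∀ y, 0 < q y)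
    (hpsum : ∑ x, p x = 1) (hqsum : ∑ y, q y = 1)
    (μhat : X → Y → ℝ) (hμhat : μhat ∈ matchings p q)
    (hbd : μhat ∉ intrinsicInterior ℝ (matchings p q)) :
    ∃ Φ : X → Y → ℝ,
      (¬ ∃ (f : X → ℝ) (g : Y → ℝ), ∀ x y, Φ x y = f x + g y) ∧
      ∀ μ ∈ matchings p q, pairing μ Φ ≤ pairing μhat Φ := by
  classical
  by_cases hz : ∃ x y, μhat x y = 0
  · obtain ⟨x0, y0, h0⟩ := hz
    obtain ⟨x1, hx1⟩ := Fintype.exists_ne_of_one_lt_card (by omega : 1 < Fintype.card X) x0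
    obtain ⟨y1, hy1⟩ := Fintype.exists_ne_of_one_lt_card (by omega : 1 < Fintype.card Y) y0
    refine ⟨fun x y => if x = x0 ∧ y = y0 then (-1 : ℝ) else 0, ?_, ?_⟩
    · rintro ⟨f, g, hfg⟩
      have h00 := hfg x0 y0
      have h01 := hfg x0 y1
      have h10 := hfg x1 y0
      have h11 := hfg x1 y1
      simp [hx1, hy1] at h00 h01 h10 h11
      linarith
    · have key : ∀ μ : X → Y → ℝ,
          pairing μ (fun x y => if x = x0 ∧ y = y0 then (-1 : ℝ) else 0) = -μ x0 y0 := by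
        intro μ
        unfold pairing
        have : ∀ x y, μ x y * (if x = x0 ∧ y = y0 then (-1 : ℝ) else 0)
            = if x = x0 then (if y = y0 then -μ x y else 0) else 0 := by
          intro x y
          by_cases hx : x = x0 <;> by_cases hy : y = y0 <;> simp [hx, hy]
        simp only [this]
        rw [Finset.sum_eq_single x0 (fun b _ hb => by simp [hb]) (by simp)]
        simp
      intro μ hμ
      rw [key, key, h0, neg_zero, neg_nonpos]
      exact hμ.1 x0 y0
  · exfalso
    apply hbd
    push_neg at hz
    have hpos : ∀ x y, 0 < μhat x y := fun x y => (hμhat.1 x y).lt_of_ne (Ne.symm (hz x y))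
    have hXne : Nonempty X := Fintype.card_pos_iff.mp (by omega)
    have hYne : Nonempty Y := Fintype.card_pos_iff.mp (by omega)
    obtain ⟨⟨a, b⟩, -, hab⟩ := Finset.exists_min_image (univ : Finset (X × Y))
      (fun z => μhat z.1 z.2) ⟨(Classical.arbitrary X, Classical.arbitrary Y), mem_univ _⟩
    set ε := μhat a b with hεdef
    have hεpos : 0 < ε := hpos a b
    have hεle : ∀ x y, ε ≤ μhat x y := fun x y => hab (x, y) (mem_univ _)
    have hspan : affineSpan ℝ (matchings p q) ≤ marginalSubspace p q := by
      rw [affineSpan_le]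
      intro ν hν
      exact ⟨hν.2.1, hν.2.2⟩
    rw [mem_intrinsicInterior]
    refine ⟨⟨μhat, subset_affineSpan ℝ _ hμhat⟩, ?_, rfl⟩
    rw [mem_interior_iff_mem_nhds]
    refine Filter.mem_of_superset (Metric.ball_mem_nhds _ hεpos) ?_
    rintro ⟨ν, hν⟩ hball
    have hdist : dist ν μhat < ε := by
      simpa [Subtype.dist_eq] using hball
    have hmarg := hspan hν
    refine ⟨?_, hmarg.1, hmarg.2⟩
    intro x y
    have h1 : dist (ν x y) (μhat x y) ≤ dist ν μhat :=
      le_trans (dist_le_pi_dist (ν x) (μhat x) y) (dist_le_pi_dist ν μhat x)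
    have h2 : |ν x y - μhat x y| < ε := lt_of_le_of_lt (by simpa [Real.dist_eq] using h1) hdist
    have := abs_lt.mp h2
    linarith [hεle x y]
end

section
/- Let X = Y = {1,2} with p = q = (1,1) (each margin equal to 1), and let μ̂ = [[0.7, 0.3],[0.3, 0.7]]. If Φ ∈ ℝ^{2×2} is such that μ̂ maximizes ⟨·, Φ⟩ over M, then Φ_{11} + Φ_{22} = Φ_{12} + Φ_{21}; consequently Φ is separable (Φ_{xy} = f_x + g_y for some f, g), and μ̂ is not rationalizable. -/
open Finset

/-- The matching `[[0.7, 0.3], [0.3, 0.7]]`. -/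
noncomputable def μhat : Fin 2 → Fin 2 → ℝ :=
  fun i j => if i = j then 0.7 else 0.3

lemma key (Φ : Fin 2 → Fin 2 → ℝ)
    (h : ∀ μ ∈ matchings (fun _ : Fin 2 => (1 : ℝ)) (fun _ : Fin 2 => (1 : ℝ)),
        pairing μ Φ ≤ pairing μhat Φ) :
    Φ 0 0 + Φ 1 1 = Φ 0 1 + Φ 1 0 := by
  have h1 := h (fun i j => if i = j then 1 else 0) ?_
  have h2 := h (fun i j => if i = j then 0 else 1) ?_
  · simp only [pairing, μhat, Fin.sum_univ_two] at h1 h2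
    norm_num at h1 h2
    linarith
  · refine ⟨fun x y => by positivity, fun x => ?_, fun y => ?_⟩
    · fin_cases x <;> simp [Fin.sum_univ_two]
    · fin_cases y <;> simp [Fin.sum_univ_two]
  · refine ⟨fun x y => by positivity, fun x => ?_, fun y => ?_⟩
    · fin_cases x <;> simp [Fin.sum_univ_two]
    · fin_cases y <;> simp [Fin.sum_univ_two]

lemma main_lem : ∀ Φ : Fin 2 → Fin 2 → ℝ,
      (∀ μ ∈ matchings (fun _ : Fin 2 => (1 : ℝ)) (fun _ : Fin 2 => (1 : ℝ)),
          pairing μ Φ ≤ pairing μhat Φ) →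
        Φ 0 0 + Φ 1 1 = Φ 0 1 + Φ 1 0 ∧
        ∃ (f : Fin 2 → ℝ) (g : Fin 2 → ℝ), ∀ x y, Φ x y = f x + g y := by
  intro Φ h
  have hk := key Φ h
  refine ⟨hk, fun x => Φ x 0, fun y => Φ 0 y - Φ 0 0, ?_⟩
  intro x y
  fin_cases x <;> fin_cases y <;> simp <;> linarith

theorem interior_matching_not_rationalizable :
    (∀ Φ : Fin 2 → Fin 2 → ℝ,
      (∀ μ ∈ matchings (fun _ : Fin 2 => (1 : ℝ)) (fun _ : Fin 2 => (1 : ℝ)),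
          pairing μ Φ ≤ pairing μhat Φ) →
        Φ 0 0 + Φ 1 1 = Φ 0 1 + Φ 1 0 ∧
        ∃ (f : Fin 2 → ℝ) (g : Fin 2 → ℝ), ∀ x y, Φ x y = f x + g y) ∧
    ¬ ∃ Φ : Fin 2 → Fin 2 → ℝ,
        (¬ ∃ (f : Fin 2 → ℝ) (g : Fin 2 → ℝ), ∀ x y, Φ x y = f x + g y) ∧
        ∀ μ ∈ matchings (fun _ : Fin 2 => (1 : ℝ)) (fun _ : Fin 2 => (1 : ℝ)),
          pairing μ Φ ≤ pairing μhat Φ := by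
  exact ⟨main_lem, fun ⟨Φ, hns, h⟩ => hns (main_lem Φ h).2⟩
end

section
/- Let X and Y be finite sets with |X| ≥ 2 and |Y| ≥ 2, and let p : X → ℝ, q : Y → ℝ be strictly positive with ∑_x p_x = ∑_y q_y = 1. If Φ ∈ ℝ^{X×Y} is such that the independent coupling p ⊗ q (with (p ⊗ q)_{xy} = p_x q_y) maximizes ⟨·, Φ⟩ over M, then Φ is separable, i.e. Φ_{xy} = f_x + g_y for some vectors f, g. In particular, p ⊗ q is never rationalizable. -/
open Finset

lemma key_lemma {X Y : Type*} [Fintype X] [Fintype Y]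
    (p : X → ℝ) (q : Y → ℝ) (hp : ∀ x, 0 < p x) (hq : ∀ y, 0 < q y)
    (hpsum : ∑ x, p x = 1) (hqsum : ∑ y, q y = 1)
    (Φ : X → Y → ℝ)
    (hmax : ∀ μ ∈ matchings p q, pairing μ Φ ≤ pairing (fun x y => p x * q y) Φ)
    (x1 x2 : X) (y1 y2 : Y) (hx : x1 ≠ x2) (hy : y1 ≠ y2) :
    Φ x1 y1 + Φ x2 y2 = Φ x1 y2 + Φ x2 y1 := by
  classical
  set d : X → ℝ := fun x => (if x = x1 then (1:ℝ) else 0) - (if x = x2 then 1 else 0) with hd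
  set e : Y → ℝ := fun y => (if y = y1 then (1:ℝ) else 0) - (if y = y2 then 1 else 0) with he
  set D : ℝ := Φ x1 y1 + Φ x2 y2 - Φ x1 y2 - Φ x2 y1 with hD
  set ε : ℝ := min (min (p x1 * q y1) (p x1 * q y2)) (min (p x2 * q y1) (p x2 * q y2)) with hε
  have h11 : ε ≤ p x1 * q y1 := le_trans (min_le_left _ _) (min_le_left _ _)
  have h12 : ε ≤ p x1 * q y2 := le_trans (min_le_left _ _) (min_le_right _ _)
  have h21 : ε ≤ p x2 * q y1 := le_trans (min_le_right _ _) (min_le_left _ _)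
  have h22 : ε ≤ p x2 * q y2 := le_trans (min_le_right _ _) (min_le_right _ _)
  have hε0 : 0 < ε :=
    lt_min (lt_min (mul_pos (hp _) (hq _)) (mul_pos (hp _) (hq _)))
      (lt_min (mul_pos (hp _) (hq _)) (mul_pos (hp _) (hq _)))
  have hesum : ∑ y, e y = 0 := by
    simp [he, Finset.sum_sub_distrib, Finset.sum_ite_eq']
  have hdsum : ∑ x, d x = 0 := by
    simp [hd, Finset.sum_sub_distrib, Finset.sum_ite_eq']
  have hmem : ∀ t : ℝ, |t| ≤ ε →
      (fun x y => p x * q y + t * (d x * e y)) ∈ matchings p q := by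
    intro t ht
    obtain ⟨ht1, ht2⟩ := abs_le.mp ht
    refine ⟨?_, ?_, ?_⟩
    · intro x y
      have hpx := hp x
      have hqy := hq y
      simp only [hd, he]
      rcases eq_or_ne x x1 with rfl | hx1
      · rw [if_pos rfl, if_neg hx]
        rcases eq_or_ne y y1 with rfl | hy1
        · rw [if_pos rfl, if_neg hy]; ring_nf; linarith
        · rw [if_neg hy1]
          rcases eq_or_ne y y2 with rfl | hy2
          · rw [if_pos rfl]; ring_nf; linarith
          · rw [if_neg hy2]; ring_nf; nlinarith [mul_pos hpx hqy]
      · rw [if_neg hx1]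
        rcases eq_or_ne x x2 with rfl | hx2
        · rw [if_pos rfl]
          rcases eq_or_ne y y1 with rfl | hy1
          · rw [if_pos rfl, if_neg hy]; ring_nf; linarith
          · rw [if_neg hy1]
            rcases eq_or_ne y y2 with rfl | hy2
            · rw [if_pos rfl]; ring_nf; linarith
            · rw [if_neg hy2]; ring_nf; nlinarith [mul_pos hpx hqy]
        · rw [if_neg hx2]; ring_nf; nlinarith [mul_pos hpx hqy]
    · intro x
      have h : ∑ y, (p x * q y + t * (d x * e y)) =
          p x * (∑ y, q y) + t * d x * (∑ y, e y) := by
        rw [Finset.mul_sum, Finset.mul_sum, ← Finset.sum_add_distrib]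
        congr 1; ext y; ring
      rw [h, hqsum, hesum]; ring
    · intro y
      have h : ∑ x, (p x * q y + t * (d x * e y)) =
          (∑ x, p x) * q y + t * e y * (∑ x, d x) := by
        rw [Finset.sum_mul, Finset.mul_sum, ← Finset.sum_add_distrib]
        congr 1; ext x; ring
      rw [h, hpsum, hdsum]; ring
  have hpair : ∀ t : ℝ, pairing (fun x y => p x * q y + t * (d x * e y)) Φ =
      pairing (fun x y => p x * q y) Φ + t * D := by
    intro t
    have inner : ∀ x, ∑ y, e y * Φ x y = Φ x y1 - Φ x y2 := by
      intro x
      simp [he, sub_mul, Finset.sum_sub_distrib, ite_mul, Finset.sum_ite_eq']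
    have outer : ∑ x, d x * (Φ x y1 - Φ x y2) = D := by
      simp only [hd, sub_mul, ite_mul, one_mul, zero_mul]
      rw [Finset.sum_sub_distrib]
      simp [Finset.sum_ite_eq', hD]
      ring
    have hrow : ∀ x, ∑ y, (p x * q y + t * (d x * e y)) * Φ x y =
        (∑ y, p x * q y * Φ x y) + t * d x * (∑ y, e y * Φ x y) := by
      intro x
      rw [Finset.mul_sum, ← Finset.sum_add_distrib]
      congr 1; ext y; ring
    have hlast : ∑ x, t * d x * (Φ x y1 - Φ x y2) = t * D := by
      rw [show (∑ x, t * d x * (Φ x y1 - Φ x y2)) =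
          t * ∑ x, d x * (Φ x y1 - Φ x y2) by
        rw [Finset.mul_sum]; congr 1; ext x; ring]
      rw [outer]
    unfold pairing
    simp_rw [hrow, inner]
    rw [Finset.sum_add_distrib, hlast]
  have A := hmax _ (hmem ε (by rw [abs_of_pos hε0]))
  have B := hmax _ (hmem (-ε) (by rw [abs_neg, abs_of_pos hε0]))
  rw [hpair] at A B
  have : D = 0 := by nlinarith
  rw [hD] at this
  linarith

theorem independent_coupling_not_rationalizable {X Y : Type*} [Fintype X] [Fintype Y]
    (hX : 2 ≤ Fintype.card X) (hY : 2 ≤ Fintype.card Y)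
    (p : X → ℝ) (q : Y → ℝ)
    (hp : ∀ x, 0 < p x) (hq : ∀ y, 0 < q y)
    (hpsum : ∑ x, p x = 1) (hqsum : ∑ y, q y = 1) :
    (∀ Φ : X → Y → ℝ,
      (∀ μ ∈ matchings p q, pairing μ Φ ≤ pairing (fun x y => p x * q y) Φ) →
        ∃ (f : X → ℝ) (g : Y → ℝ), ∀ x y, Φ x y = f x + g y) ∧
    ¬ ∃ Φ : X → Y → ℝ,
        (¬ ∃ (f : X → ℝ) (g : Y → ℝ), ∀ x y, Φ x y = f x + g y) ∧
        ∀ μ ∈ matchings p q, pairing μ Φ ≤ pairing (fun x y => p x * q y) Φ := by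
  have hXne : Nonempty X := Fintype.card_pos_iff.mp (by omega)
  have hYne : Nonempty Y := Fintype.card_pos_iff.mp (by omega)
  obtain ⟨x0⟩ := hXne
  obtain ⟨y0⟩ := hYne
  have main : ∀ Φ : X → Y → ℝ,
      (∀ μ ∈ matchings p q, pairing μ Φ ≤ pairing (fun x y => p x * q y) Φ) →
        ∃ (f : X → ℝ) (g : Y → ℝ), ∀ x y, Φ x y = f x + g y := by
    intro Φ hmax
    refine ⟨fun x => Φ x y0 - Φ x0 y0, fun y => Φ x0 y, ?_⟩
    intro x y
    rcases eq_or_ne x x0 with rfl | hxx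
    · ring
    · rcases eq_or_ne y y0 with rfl | hyy
      · ring
      · have := key_lemma p q hp hq hpsum hqsum Φ hmax x x0 y y0 hxx hyy
        show Φ x y = (Φ x y0 - Φ x0 y0) + Φ x0 y
        linarith
  refine ⟨main, ?_⟩
  rintro ⟨Φ, hns, hmax⟩
  exact hns (main Φ hmax)
end

section
/- Let X and Y be finite sets with |X| ≥ 2 and |Y| ≥ 2, and let p : X → ℝ, q : Y → ℝ be strictly positive with ∑_x p_x = ∑_y q_y = 1. Let μ̂ ∈ M with μ̂ ≠ p ⊗ q, let t* = max{t ≥ 1 : p ⊗ q + t(μ̂ − p ⊗ q) ∈ M}, and set μ* = p ⊗ q + t*(μ̂ − p ⊗ q). Then μ* lies on the relative boundary of M (μ* ∈ M but μ* is not in the relative interior of M); consequently μ* is rationalizable: there exists a non-separable Φ such that μ* maximizes ⟨·, Φ⟩ over M. Moreover, if μ̂ itself is rationalizable then t* = 1 and μ* = μ̂. -/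
open Finset

section Aux

variable {X Y : Type*} [Fintype X] [Fintype Y]

lemma indep_mem (p : X → ℝ) (q : Y → ℝ) (hp : ∀ x, 0 < p x) (hq : ∀ y, 0 < q y)
    (hpsum : ∑ x, p x = 1) (hqsum : ∑ y, q y = 1) :
    (fun x y => p x * q y) ∈ matchings p q := by
  refine ⟨fun x y => mul_nonneg (hp x).le (hq y).le, fun x => ?_, fun y => ?_⟩
  · rw [← Finset.mul_sum, hqsum, mul_one]
  · rw [← Finset.sum_mul, hpsum, one_mul]

open Classical in
lemma indicator_not_separable (hX : 2 ≤ Fintype.card X) (hY : 2 ≤ Fintype.card Y)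
    (x1 : X) (y1 : Y) :
    ¬ ∃ (f : X → ℝ) (g : Y → ℝ), ∀ x y,
      (if x = x1 ∧ y = y1 then (-1 : ℝ) else 0) = f x + g y := by
  rintro ⟨f, g, hfg⟩
  obtain ⟨x2, hx2⟩ := Fintype.exists_ne_of_one_lt_card (by omega) x1
  obtain ⟨y2, hy2⟩ := Fintype.exists_ne_of_one_lt_card (by omega) y1
  have h11 := hfg x1 y1
  have h12 := hfg x1 y2
  have h21 := hfg x2 y1
  have h22 := hfg x2 y2
  rw [if_pos ⟨rfl, rfl⟩] at h11
  rw [if_neg (by simp [hy2])] at h12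
  rw [if_neg (by simp [hx2])] at h21
  rw [if_neg (by simp [hx2])] at h22
  linarith

end Aux

theorem gauge_projection_rationalizable {X Y : Type*} [Fintype X] [Fintype Y]
    (hX : 2 ≤ Fintype.card X) (hY : 2 ≤ Fintype.card Y)
    (p : X → ℝ) (q : Y → ℝ)
    (hp : ∀ x, 0 < p x) (hq : ∀ y, 0 < q y)
    (hpsum : ∑ x, p x = 1) (hqsum : ∑ y, q y = 1)
    (μhat : X → Y → ℝ) (hμhat : μhat ∈ matchings p q)
    (hne : μhat ≠ fun x y => p x * q y)
    (tstar : ℝ)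
    (htstar : IsGreatest {t : ℝ | 1 ≤ t ∧
      (fun x y => p x * q y + t * (μhat x y - p x * q y)) ∈ matchings p q} tstar) :
    letI μstar : X → Y → ℝ := fun x y => p x * q y + tstar * (μhat x y - p x * q y)
    μstar ∈ matchings p q ∧
      μstar ∉ intrinsicInterior ℝ (matchings p q) ∧
      (∃ Φ : X → Y → ℝ,
        (¬ ∃ (f : X → ℝ) (g : Y → ℝ), ∀ x y, Φ x y = f x + g y) ∧
        ∀ μ ∈ matchings p q, pairing μ Φ ≤ pairing μstar Φ) ∧
      ((∃ Φ : X → Y → ℝ,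
          (¬ ∃ (f : X → ℝ) (g : Y → ℝ), ∀ x y, Φ x y = f x + g y) ∧
          ∀ μ ∈ matchings p q, pairing μ Φ ≤ pairing μhat Φ) →
        tstar = 1 ∧ μstar = μhat) := by
  classical
  haveI hXne : Nonempty X := Fintype.card_pos_iff.mp (by omega)
  haveI hYne : Nonempty Y := Fintype.card_pos_iff.mp (by omega)
  set d : X → Y → ℝ := fun x y => μhat x y - p x * q y with hd
  set μstar : X → Y → ℝ := fun x y => p x * q y + tstar * d x y with hμs
  have hpq : (fun x y => p x * q y) ∈ matchings p q := indep_mem p q hp hq hpsum hqsum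
  have ht1 : 1 ≤ tstar := htstar.1.1
  have hmemstar : μstar ∈ matchings p q := htstar.1.2
  -- row and column sums of d are zero
  have hdrow : ∀ x, ∑ y, d x y = 0 := by
    intro x
    simp only [hd, Finset.sum_sub_distrib, hμhat.2.1 x, ← Finset.mul_sum, hqsum, mul_one,
      sub_self]
  have hdcol : ∀ y, ∑ x, d x y = 0 := by
    intro y
    simp only [hd, Finset.sum_sub_distrib, hμhat.2.2 y, ← Finset.sum_mul, hpsum, one_mul,
      sub_self]
  -- d has a negative entry
  have hdneg : ∃ x y, d x y < 0 := by
    by_contra h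
    push_neg at h
    apply hne
    funext x y
    have hall : ∀ x y, d x y = 0 := by
      intro x y
      have h1 : ∑ x, ∑ y, d x y = 0 := by simp [hdrow]
      have h2 : ∀ z ∈ (Finset.univ : Finset X), ∑ y, d z y = 0 := fun z _ => hdrow z
      have := Finset.sum_eq_zero_iff_of_nonneg
        (fun y _ => h x y) |>.mp (hdrow x) y (Finset.mem_univ y)
      exact this
    have := hall x y
    simp only [hd] at this
    linarith
  -- μstar has a zero entry
  have hzero : ∃ x1 y1, μstar x1 y1 = 0 := by
    by_contra h
    push_neg at h
    have hpos : ∀ x y, 0 < μstar x y := by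
      intro x y
      exact lt_of_le_of_ne (hmemstar.1 x y) (Ne.symm (h x y))
    -- set of negative-d entries
    obtain ⟨x0, y0, hx0y0⟩ := hdneg
    set S : Finset (X × Y) := Finset.univ.filter (fun z => d z.1 z.2 < 0) with hS
    have hSne : S.Nonempty := ⟨(x0, y0), by simp [hS, hx0y0]⟩
    set ε : ℝ := S.inf' hSne (fun z => μstar z.1 z.2 / (-(d z.1 z.2))) with hε
    have hεpos : 0 < ε := by
      rw [hε, Finset.lt_inf'_iff]
      intro z hz
      have hzneg : d z.1 z.2 < 0 := by simpa [hS] using hz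
      exact div_pos (hpos z.1 z.2) (by linarith)
    have hmem : tstar + ε ∈ {t : ℝ | 1 ≤ t ∧
        (fun x y => p x * q y + t * (μhat x y - p x * q y)) ∈ matchings p q} := by
      refine ⟨by linarith, ⟨fun x y => ?_, fun x => ?_, fun y => ?_⟩⟩
      · show 0 ≤ p x * q y + (tstar + ε) * (μhat x y - p x * q y)
        rcases lt_or_ge (d x y) 0 with hneg | hpos'
        · have hzS : (x, y) ∈ S := by simp [hS, hneg]
          have hle : ε ≤ μstar x y / (-(d x y)) := Finset.inf'_le _ hzS
          have h2 : ε * (-(d x y)) ≤ μstar x y :=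
            (le_div_iff₀ (by linarith : (0:ℝ) < -(d x y))).mp hle
          have : μstar x y = p x * q y + tstar * (μhat x y - p x * q y) := rfl
          simp only [hd] at h2 ⊢
          nlinarith [hpos x y]
        · have : 0 ≤ (tstar + ε) * d x y :=
            mul_nonneg (by linarith) hpos'
          have hpq' : 0 < p x * q y := mul_pos (hp x) (hq y)
          simp only [hd] at this
          linarith
      · show ∑ y, (p x * q y + (tstar + ε) * (μhat x y - p x * q y)) = p x
        rw [Finset.sum_add_distrib, ← Finset.mul_sum, ← Finset.mul_sum, hqsum, mul_one]
        have := hdrow x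
        simp only [hd] at this
        rw [this, mul_zero, add_zero]
      · show ∑ x, (p x * q y + (tstar + ε) * (μhat x y - p x * q y)) = q y
        rw [Finset.sum_add_distrib, ← Finset.sum_mul, ← Finset.mul_sum, hpsum, one_mul]
        have := hdcol y
        simp only [hd] at this
        rw [this, mul_zero, add_zero]
    have := htstar.2 hmem
    linarith
  obtain ⟨x1, y1, hx1y1⟩ := hzero
  -- Part 3 : the witness Φ
  have part3 : ∃ Φ : X → Y → ℝ,
      (¬ ∃ (f : X → ℝ) (g : Y → ℝ), ∀ x y, Φ x y = f x + g y) ∧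
      ∀ μ ∈ matchings p q, pairing μ Φ ≤ pairing μstar Φ := by
    refine ⟨fun x y => if x = x1 ∧ y = y1 then (-1 : ℝ) else 0,
      indicator_not_separable hX hY x1 y1, ?_⟩
    intro μ hμ
    have hval : ∀ ν : X → Y → ℝ, pairing ν (fun x y => if x = x1 ∧ y = y1 then (-1:ℝ) else 0)
        = -(ν x1 y1) := by
      intro ν
      unfold pairing
      rw [Finset.sum_eq_single x1]
      · rw [Finset.sum_eq_single y1]
        · simp
        · intro b _ hb; simp [hb]
        · simp
      · intro a _ ha
        apply Finset.sum_eq_zero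
        intro b _
        simp [ha]
      · simp
    rw [hval, hval, hx1y1]
    simp [hμ.1 x1 y1]
  -- Part 2 : not in intrinsic interior
  have part2 : μstar ∉ intrinsicInterior ℝ (matchings p q) := by
    intro hmem
    obtain ⟨z, hz, hzx⟩ := mem_intrinsicInterior.mp hmem
    -- the line through p⊗q and μhat lies in the affine span
    have hline : ∀ t : ℝ, (fun x y => p x * q y + t * d x y) ∈
        affineSpan ℝ (matchings p q) := by
      intro t
      have h1 : (fun x y => p x * q y) ∈ affineSpan ℝ (matchings p q) :=
        subset_affineSpan ℝ _ hpq
      have h2 : μhat ∈ affineSpan ℝ (matchings p q) := subset_affineSpan ℝ _ hμhat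
      have := AffineMap.lineMap_mem (Q := affineSpan ℝ (matchings p q)) t h1 h2
      convert this using 1
      simp only [AffineMap.lineMap_apply, vsub_eq_sub, vadd_eq_add]
      funext x y
      simp only [hd, Pi.add_apply, Pi.sub_apply, Pi.smul_apply, smul_eq_mul]
      ring
    set φ : ℝ → affineSpan ℝ (matchings p q) :=
      fun t => ⟨fun x y => p x * q y + t * d x y, hline t⟩ with hφ
    have hφcont : Continuous φ := by
      apply Continuous.subtype_mk
      apply continuous_pi
      intro x
      apply continuous_pi
      intro y
      fun_prop
    have hφt : φ tstar = z := by
      apply Subtype.ext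
      rw [hzx]
    have hopen : IsOpen (φ ⁻¹' interior (((↑) : affineSpan ℝ (matchings p q) → _) ⁻¹'
        (matchings p q))) := (isOpen_interior).preimage hφcont
    have htmem : tstar ∈ φ ⁻¹' interior (((↑) : affineSpan ℝ (matchings p q) → _) ⁻¹'
        (matchings p q)) := by
      simp only [Set.mem_preimage, hφt]
      exact hz
    obtain ⟨δ, hδ, hball⟩ := Metric.isOpen_iff.mp hopen tstar htmem
    have hballmem : tstar + δ/2 ∈ Metric.ball tstar δ := by
      rw [Metric.mem_ball, Real.dist_eq, add_sub_cancel_left, abs_of_pos (by linarith)]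
      linarith
    have hmem2 : (fun x y => p x * q y + (tstar + δ/2) * d x y) ∈ matchings p q := by
      have h2 := interior_subset (hball hballmem)
      exact h2
    have : tstar + δ/2 ≤ tstar := by
      apply htstar.2
      refine ⟨by linarith, ?_⟩
      convert hmem2 using 2
    linarith
  -- Part 4
  have part4 : (∃ Φ : X → Y → ℝ,
      (¬ ∃ (f : X → ℝ) (g : Y → ℝ), ∀ x y, Φ x y = f x + g y) ∧
      ∀ μ ∈ matchings p q, pairing μ Φ ≤ pairing μhat Φ) →
      tstar = 1 ∧ μstar = μhat := by
    rintro ⟨Φ, hΦns, hΦmax⟩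
    have ht_eq : tstar = 1 := by
      by_contra hne1
      have ht : 1 < tstar := lt_of_le_of_ne ht1 (Ne.symm hne1)
      set lam : ℝ := 1 / tstar with hlam
      have hlam0 : 0 < lam := by positivity
      have hlam1 : lam < 1 := by
        rw [hlam, div_lt_one (by linarith)]; exact ht
      have hconv : ∀ x y, μhat x y = (1 - lam) * (p x * q y) + lam * μstar x y := by
        intro x y
        simp only [hμs, hd, hlam]
        field_simp
        ring
      have hpairconv : pairing μhat Φ =
          (1 - lam) * pairing (fun x y => p x * q y) Φ + lam * pairing μstar Φ := by
        unfold pairing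
        rw [Finset.mul_sum, Finset.mul_sum, ← Finset.sum_add_distrib]
        apply Finset.sum_congr rfl
        intro x _
        rw [Finset.mul_sum, Finset.mul_sum, ← Finset.sum_add_distrib]
        apply Finset.sum_congr rfl
        intro y _
        rw [hconv x y]
        ring
      have hle1 : pairing (fun x y => p x * q y) Φ ≤ pairing μhat Φ := hΦmax _ hpq
      have hle2 : pairing μstar Φ ≤ pairing μhat Φ := hΦmax _ hmemstar
      -- p⊗q is also a maximizer
      have hpqmax : pairing (fun x y => p x * q y) Φ = pairing μhat Φ := by
        nlinarith
      -- now derive separability of Φ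
      exfalso
      apply hΦns
      obtain ⟨x0⟩ := id hXne
      obtain ⟨y0⟩ := id hYne
      refine ⟨fun x => Φ x y0 - Φ x0 y0, fun y => Φ x0 y, ?_⟩
      intro x y
      rcases eq_or_ne x x0 with rfl | hxx0
      · ring
      rcases eq_or_ne y y0 with rfl | hyy0
      · ring
      -- rectangle direction
      set u : X → ℝ := fun a => (if a = x then (1:ℝ) else 0) - (if a = x0 then 1 else 0)
        with hu
      set v : Y → ℝ := fun b => (if b = y then (1:ℝ) else 0) - (if b = y0 then 1 else 0)
        with hv
      have husum : ∑ a, u a = 0 := by simp [hu, Finset.sum_sub_distrib]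
      have hvsum : ∑ b, v b = 0 := by simp [hv, Finset.sum_sub_distrib]
      have hubound : ∀ a, -1 ≤ u a ∧ u a ≤ 1 := by
        intro a; simp only [hu]; split_ifs <;> norm_num
      have hvbound : ∀ b, -1 ≤ v b ∧ v b ≤ 1 := by
        intro b; simp only [hv]; split_ifs <;> norm_num
      set pmin : ℝ := Finset.univ.inf' Finset.univ_nonempty p with hpm
      set qmin : ℝ := Finset.univ.inf' Finset.univ_nonempty q with hqm
      have hpmpos : 0 < pmin := by
        rw [hpm, Finset.lt_inf'_iff]; intro a _; exact hp a
      have hqmpos : 0 < qmin := by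
        rw [hqm, Finset.lt_inf'_iff]; intro b _; exact hq b
      have hpmle : ∀ a, pmin ≤ p a := fun a => Finset.inf'_le _ (Finset.mem_univ a)
      have hqmle : ∀ b, qmin ≤ q b := fun b => Finset.inf'_le _ (Finset.mem_univ b)
      set ε : ℝ := pmin * qmin with hεdef
      have hεpos : 0 < ε := mul_pos hpmpos hqmpos
      have hmemdir : ∀ s : ℝ, |s| ≤ 1 →
          (fun a b => p a * q b + (s * ε) * (u a * v b)) ∈ matchings p q := by
        intro s hs
        refine ⟨fun a b => ?_, fun a => ?_, fun b => ?_⟩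
        · show 0 ≤ p a * q b + (s * ε) * (u a * v b)
          have h1 : |u a * v b| ≤ 1 := by
            rw [abs_mul]
            have := hubound a; have := hvbound b
            have hua : |u a| ≤ 1 := abs_le.mpr (hubound a)
            have hvb : |v b| ≤ 1 := abs_le.mpr (hvbound b)
            calc |u a| * |v b| ≤ 1 * 1 := by
                  apply mul_le_mul hua hvb (abs_nonneg _) zero_le_one
              _ = 1 := one_mul 1
          have h2 : |s * ε * (u a * v b)| ≤ ε := by
            rw [abs_mul, abs_mul, abs_of_pos hεpos]
            calc |s| * ε * |u a * v b| ≤ 1 * ε * 1 := by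
                  apply mul_le_mul (mul_le_mul hs le_rfl hεpos.le zero_le_one) h1
                    (abs_nonneg _) (by positivity)
              _ = ε := by ring
          have h3 : -(ε) ≤ s * ε * (u a * v b) := neg_le_of_abs_le h2
          have h4 : ε ≤ p a * q b := by
            calc ε = pmin * qmin := rfl
              _ ≤ p a * q b := mul_le_mul (hpmle a) (hqmle b) hqmpos.le (hp a).le
          linarith
        · show ∑ b, (p a * q b + (s * ε) * (u a * v b)) = p a
          rw [Finset.sum_add_distrib, ← Finset.mul_sum, ← Finset.mul_sum, hqsum, mul_one,
            ← Finset.mul_sum, hvsum, mul_zero, mul_zero, add_zero]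
        · show ∑ a, (p a * q b + (s * ε) * (u a * v b)) = q b
          rw [Finset.sum_add_distrib, ← Finset.sum_mul, ← Finset.mul_sum, hpsum, one_mul]
          rw [← Finset.sum_mul, husum, zero_mul, mul_zero, add_zero]
      have hpairdir : ∀ s : ℝ,
          pairing (fun a b => p a * q b + (s * ε) * (u a * v b)) Φ
            = pairing (fun x y => p x * q y) Φ
              + s * ε * (Φ x y - Φ x y0 - Φ x0 y + Φ x0 y0) := by
        intro s
        unfold pairing
        have key : ∑ a, ∑ b, (u a * v b) * Φ a b
            = Φ x y - Φ x y0 - Φ x0 y + Φ x0 y0 := by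
          have hinner : ∀ a, ∑ b, (u a * v b) * Φ a b = u a * (Φ a y - Φ a y0) := by
            intro a
            have : ∀ b, (u a * v b) * Φ a b = u a * (v b * Φ a b) := fun b => by ring
            simp only [this]
            rw [← Finset.mul_sum]
            congr 1
            simp only [hv, sub_mul]
            rw [Finset.sum_sub_distrib]
            congr 1
            · rw [Finset.sum_eq_single y]
              · simp
              · intro b _ hb; simp [hb]
              · simp
            · rw [Finset.sum_eq_single y0]
              · simp
              · intro b _ hb; simp [hb]
              · simp
          simp only [hinner]
          simp only [hu, sub_mul]
          rw [Finset.sum_sub_distrib]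
          rw [Finset.sum_eq_single x, Finset.sum_eq_single x0]
          · simp; ring
          · intro a _ ha; simp [ha]
          · simp
          · intro a _ ha; simp [ha]
          · simp
        calc ∑ a, ∑ b, (p a * q b + s * ε * (u a * v b)) * Φ a b
            = ∑ a, ∑ b, ((p a * q b) * Φ a b + (s * ε) * ((u a * v b) * Φ a b)) := by
              apply Finset.sum_congr rfl; intro a _
              apply Finset.sum_congr rfl; intro b _; ring
          _ = (∑ a, ∑ b, (p a * q b) * Φ a b)
              + (s * ε) * ∑ a, ∑ b, (u a * v b) * Φ a b := by
              rw [Finset.mul_sum, ← Finset.sum_add_distrib]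
              apply Finset.sum_congr rfl; intro a _
              rw [Finset.mul_sum, ← Finset.sum_add_distrib]
          _ = _ := by rw [key]
      set R : ℝ := Φ x y - Φ x y0 - Φ x0 y + Φ x0 y0 with hR
      have hplus := hΦmax _ (hmemdir 1 (by norm_num))
      have hminus := hΦmax _ (hmemdir (-1) (by norm_num))
      rw [hpairdir 1] at hplus
      rw [hpairdir (-1)] at hminus
      rw [hpqmax] at hplus hminus
      have hRzero : R = 0 := by
        have h1 : ε * R ≤ 0 := by linarith
        have h2 : -(ε * R) ≤ 0 := by linarith
        have : ε * R = 0 := le_antisymm h1 (by linarith)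
        exact (mul_eq_zero.mp this).resolve_left (ne_of_gt hεpos)
      rw [hR] at hRzero
      show Φ x y = (Φ x y0 - Φ x0 y0) + Φ x0 y
      linarith
    refine ⟨ht_eq, ?_⟩
    funext x y
    simp only [hμs, hd, ht_eq]
    ring
  exact ⟨hmemstar, part2, part3, part4⟩
end
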